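/- arXiv:1604.02678 — 4 statements merged into one kernel-verified Lean document; each statement's English description precedes it below -/
import Mathlib

section
/- Let (X, d) be a metric space. Then every admissible cover of X has a Lebesgue number, i.e., there exists δ > 0 such that every subset of X of diameter less than δ is contained in some member of the cover. -/
/-- Every admissible cover of a metric space has a Lebesgue number: if
`U : ι → Set X` (with `ι` finite) is an open cover all of whose members are
admissible (the closure or the complement of each member is compact), then there
is `δ > 0` such that every nonempty subset of `X` of diameter less than `δ` is
contained in some member of the cover. -/
theorem admissible_cover_has_lebesgue_number {X : Type*} [MetricSpace X]
    {ι : Type*} [Finite ι] (U : ι → Set X)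
    (hopen : ∀ i, IsOpen (U i))
    (hadm : ∀ i, IsCompact (closure (U i)) ∨ IsCompact (U i)ᶜ)
    (hcover : (⋃ i, U i) = Set.univ) :
    ∃ δ : ℝ, 0 < δ ∧ ∀ S : Set X, S.Nonempty →
      EMetric.diam S < ENNReal.ofReal δ → ∃ i, S ⊆ U i := by
  by_cases h : ∃ i₀, IsCompact (U i₀)ᶜ
  · obtain ⟨i₀, hK⟩ := h
    obtain ⟨δ, hδ, hball⟩ := lebesgue_number_lemma_of_metric hK hopen
      (by rw [hcover]; exact Set.subset_univ _)
    refine ⟨δ, hδ, fun S hS hdiam => ?_⟩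
    by_cases hSK : ∃ x ∈ S, x ∈ (U i₀)ᶜ
    · obtain ⟨x, hxS, hxK⟩ := hSK
      obtain ⟨i, hi⟩ := hball x hxK
      refine ⟨i, fun y hy => hi ?_⟩
      have := lt_of_le_of_lt (EMetric.edist_le_diam_of_mem hxS hy) hdiam
      rw [edist_lt_ofReal] at this
      simpa [Metric.mem_ball, dist_comm] using this
    · push_neg at hSK
      exact ⟨i₀, fun y hy => by simpa using hSK y hy⟩
  · push_neg at h
    have hcl : ∀ i, IsCompact (closure (U i)) := fun i => (hadm i).resolve_right (h i)
    have hXc : IsCompact (Set.univ : Set X) := by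
      refine IsCompact.of_isClosed_subset (isCompact_iUnion fun i => hcl i) isClosed_univ ?_
      rw [← hcover]
      exact Set.iUnion_mono fun i => subset_closure
    obtain ⟨δ, hδ, hball⟩ := lebesgue_number_lemma_of_metric hXc hopen
      (by rw [hcover])
    refine ⟨δ, hδ, fun S ⟨x, hxS⟩ hdiam => ?_⟩
    obtain ⟨i, hi⟩ := hball x (Set.mem_univ x)
    refine ⟨i, fun y hy => hi ?_⟩
    have := lt_of_le_of_lt (EMetric.edist_le_diam_of_mem hxS hy) hdiam
    rw [edist_lt_ofReal] at this
    simpa [Metric.mem_ball, dist_comm] using this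
end

section
/- Let X be a locally compact separable metric space and let d be the restriction to X of a metric d̃ on the one-point compactification X̃ inducing its topology. Then for every ε > 0 there exists a finite cover of X by admissible open sets each having diameter less than ε. -/
open Metric Set OnePoint

/-- Let `X` be a locally compact separable metric space whose metric `d` is the
restriction of a metric `d̃` on the one-point compactification `X̃` inducing the
topology of `X̃`. Then for every `ε > 0` there is a finite cover of `X` by
admissible open sets (sets whose closure or complement is compact), each of
diameter less than `ε`. -/
theorem exists_admissible_cover_of_small_diam {X : Type*} [MetricSpace X]
    [LocallyCompactSpace X] [TopologicalSpace.SeparableSpace X]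
    (m : MetricSpace (OnePoint X))
    (hcompat : m.toUniformSpace.toTopologicalSpace =
      (inferInstance : TopologicalSpace (OnePoint X)))
    (hrestrict : ∀ x y : X,
      @dist _ m.toPseudoMetricSpace.toDist (x : OnePoint X) (y : OnePoint X) = dist x y) :
    ∀ ε : ℝ, 0 < ε → ∃ (n : ℕ) (U : Fin n → Set X),
      (∀ i, IsOpen (U i)) ∧
      (∀ i, IsCompact (closure (U i)) ∨ IsCompact (U i)ᶜ) ∧
      (⋃ i, U i) = Set.univ ∧
      (∀ i, EMetric.diam (U i) < ENNReal.ofReal ε) := by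
  classical
  intro ε hε
  set D : OnePoint X → OnePoint X → ℝ := @dist _ m.toPseudoMetricSpace.toDist with hD
  have Dtri : ∀ a b c, D a c ≤ D a b + D b c := @dist_triangle _ m.toPseudoMetricSpace
  have Dsymm : ∀ a b, D a b = D b a := @dist_comm _ m.toPseudoMetricSpace
  have Dself : ∀ a, D a a = 0 := @dist_self _ m.toPseudoMetricSpace
  set r : ℝ := ε / 3 with hr
  set δ : ℝ := ε / 12 with hδdef
  have hr0 : 0 < r := by positivity
  have hδ0 : 0 < δ := by positivity
  have hδr : δ < r / 2 := by rw [hr, hδdef]; linarith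
  -- open and closed balls w.r.t. m are open/closed in the canonical topology
  have hopen : ∀ (c : OnePoint X) (ρ : ℝ), IsOpen {z : OnePoint X | D z c < ρ} := by
    intro c ρ
    have h := @Metric.isOpen_ball _ m.toPseudoMetricSpace c ρ
    rw [hcompat] at h
    exact h
  have hclosed : ∀ (c : OnePoint X) (ρ : ℝ), IsClosed {z : OnePoint X | D z c ≤ ρ} := by
    intro c ρ
    have h := @Metric.isClosed_closedBall _ m.toPseudoMetricSpace c ρ
    rw [hcompat] at h
    exact h
  -- the set far from infinity
  set K : Set (OnePoint X) := {z | r ≤ D z ∞} with hK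
  have hKclosed : IsClosed K := by
    have : K = {z : OnePoint X | D z ∞ < r}ᶜ := by
      ext z; simp [hK, not_lt]
    rw [this]
    exact (hopen ∞ r).isClosed_compl
  have hKcompact : IsCompact K := hKclosed.isCompact
  have hKsub : K ⊆ Set.range ((↑) : X → OnePoint X) := by
    intro z hz
    rcases z with _ | x
    · exfalso
      have : r ≤ D ∞ ∞ := hz
      rw [Dself] at this; linarith
    · exact ⟨x, rfl⟩
  -- cover K by small balls centered at points far from infinity
  set ι := {x : X // r / 2 ≤ D (↑x) ∞} with hι
  have hcover : K ⊆ ⋃ x : ι, {z : OnePoint X | D z ↑(x : ι).1 < δ} := by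
    intro z hz
    rcases hKsub hz with ⟨x, rfl⟩
    have hx : r / 2 ≤ D (↑x) ∞ := le_trans (by linarith) hz
    exact Set.mem_iUnion.2 ⟨⟨x, hx⟩, by simp [Dself, hδ0]⟩
  obtain ⟨t, ht⟩ := hKcompact.elim_finite_subcover
    (fun x : ι => {z : OnePoint X | D z ↑(x : ι).1 < δ}) (fun x => hopen _ _) hcover
  set e := t.equivFin.symm with he
  -- the cover of X
  set U0 : Set X := {y : X | D (↑y) ∞ < r} with hU0
  refine ⟨t.card + 1, Fin.cons U0 (fun j => Metric.ball ((e j : ι) : X) δ), ?_, ?_, ?_, ?_⟩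
  · refine Fin.cases ?_ ?_
    · rw [Fin.cons_zero]
      exact (hopen ∞ r).preimage OnePoint.continuous_coe
    · intro j; rw [Fin.cons_succ]; exact Metric.isOpen_ball
  · refine Fin.cases ?_ ?_
    · right
      rw [Fin.cons_zero]
      have heq : (U0)ᶜ = ((↑) : X → OnePoint X) ⁻¹' K := by
        ext y; simp [hU0, hK, not_lt]
      rw [heq]
      exact OnePoint.isOpenEmbedding_coe.isInducing.isCompact_preimage' hKcompact hKsub
    · intro j
      left
      rw [Fin.cons_succ]
      set x : X := ((e j : ι) : X) with hx
      set C : Set (OnePoint X) := {z | D z ↑x ≤ δ} with hC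
      have hCcompact : IsCompact C := (hclosed _ _).isCompact
      have hCsub : C ⊆ Set.range ((↑) : X → OnePoint X) := by
        intro z hz
        rcases z with _ | y
        · exfalso
          have h1 : D ∞ ↑x ≤ δ := hz
          have h2 : r / 2 ≤ D (↑x) ∞ := (e j : ι).2
          rw [Dsymm] at h2; linarith
        · exact ⟨y, rfl⟩
      have hP : IsCompact (((↑) : X → OnePoint X) ⁻¹' C) :=
        OnePoint.isOpenEmbedding_coe.isInducing.isCompact_preimage' hCcompact hCsub
      have hPclosed : IsClosed (((↑) : X → OnePoint X) ⁻¹' C) :=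
        (hclosed _ _).preimage OnePoint.continuous_coe
      refine hP.of_isClosed_subset isClosed_closure (closure_minimal ?_ hPclosed)
      intro y hy
      have : dist y x < δ := hy
      show D (↑y) (↑x) ≤ δ
      rw [hrestrict]
      exact le_of_lt this
  · ext y
    simp only [Set.mem_iUnion, Set.mem_univ, iff_true]
    by_cases h : D (↑y) ∞ < r
    · exact ⟨0, by rw [Fin.cons_zero]; exact h⟩
    · have hyK : (↑y : OnePoint X) ∈ K := not_lt.1 h
      have := ht hyK
      simp only [Set.mem_iUnion] at this
      obtain ⟨x, hxt, hxy⟩ := this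
      refine ⟨(t.equivFin ⟨x, hxt⟩).succ, ?_⟩
      rw [Fin.cons_succ]
      have hex : (e (t.equivFin ⟨x, hxt⟩) : ι) = x := by
        simp [he]
      rw [hex]
      show dist y (x : ι).1 < δ
      rw [← hrestrict]
      exact hxy
  · have key : ∀ (s : Set X) (c : ℝ), 0 ≤ c → c < ε →
        (∀ y ∈ s, ∀ z ∈ s, dist y z ≤ c) → EMetric.diam s < ENNReal.ofReal ε := by
      intro s c hc0 hcε hs
      have h1 : EMetric.diam s ≤ ENNReal.ofReal c := by
        refine EMetric.diam_le ?_
        intro y hy z hz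
        rw [edist_dist]
        exact ENNReal.ofReal_le_ofReal (hs y hy z hz)
      exact lt_of_le_of_lt h1 ((ENNReal.ofReal_lt_ofReal_iff hε).2 hcε)
    refine Fin.cases ?_ ?_
    · rw [Fin.cons_zero]
      refine key _ (2 * r) (by positivity) (by rw [hr]; linarith) ?_
      intro y hy z hz
      have h1 : D (↑y) ∞ < r := hy
      have h2 : D (↑z) ∞ < r := hz
      have h3 : D (↑y) (↑z) ≤ D (↑y) ∞ + D ∞ (↑z) := Dtri _ _ _
      rw [Dsymm ∞ (↑z)] at h3
      rw [← hrestrict]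
      linarith
    · intro j
      rw [Fin.cons_succ]
      refine key _ (2 * δ) (by positivity) (by rw [hδdef]; linarith) ?_
      intro y hy z hz
      have h1 : dist y ((e j : ι) : X) < δ := hy
      have h2 : dist z ((e j : ι) : X) < δ := hz
      have := dist_triangle y ((e j : ι) : X) z
      rw [dist_comm ((e j : ι) : X) z] at this
      linarith
end

section
/- Let f : X → X be a homeomorphism of a locally compact separable metric space X whose metric is the restriction of a metric on the one-point compactification X̃. Then f has a generator if and only if f has a weak generator. -/
section

variable {X : Type*} [MetricSpace X]

/-- `α : Fin k → Set X` is an admissible cover: a finite open cover of `X` whose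
members are admissible open sets (closure or complement compact). -/
def IsAdmissibleCover {k : ℕ} (α : Fin k → Set X) : Prop :=
  (∀ i, IsOpen (α i)) ∧ (∀ i, IsCompact (closure (α i)) ∨ IsCompact (α i)ᶜ) ∧
    (⋃ i, α i) = Set.univ

/-- `f` (a homeomorphism given by the bijection `e`) has a generator: a finite
admissible cover `α` such that `⋂ n : ℤ, f⁻ⁿ(cl (α (A n)))` contains at most one
point for every bisequence `A` from `α`. -/
def HasGenerator (e : X ≃ X) : Prop :=
  ∃ (k : ℕ) (α : Fin k → Set X), IsAdmissibleCover α ∧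
    ∀ A : ℤ → Fin k, (⋂ n : ℤ, (⇑(e ^ n)) ⁻¹' closure (α (A n))).Subsingleton

/-- `f` has a weak generator: a finite admissible cover `α` such that
`⋂ n : ℤ, f⁻ⁿ(α (A n))` contains at most one point for every bisequence `A`. -/
def HasWeakGenerator (e : X ≃ X) : Prop :=
  ∃ (k : ℕ) (α : Fin k → Set X), IsAdmissibleCover α ∧
    ∀ A : ℤ → Fin k, (⋂ n : ℤ, (⇑(e ^ n)) ⁻¹' (α (A n))).Subsingleton

/-- Let `f : X → X` be a homeomorphism of a locally compact separable metric
space `X` whose metric is the restriction of a metric on the one-point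
compactification `X̃`. Then `f` has a generator iff `f` has a weak generator. -/
theorem hasGenerator_iff_hasWeakGenerator
    [LocallyCompactSpace X] [TopologicalSpace.SeparableSpace X]
    (m : MetricSpace (OnePoint X))
    (hcompat : m.toUniformSpace.toTopologicalSpace =
      (inferInstance : TopologicalSpace (OnePoint X)))
    (hrestrict : ∀ x y : X,
      @dist _ m.toPseudoMetricSpace.toDist (x : OnePoint X) (y : OnePoint X) = dist x y)
    (e : X ≃ X) (hc : Continuous e) (hc' : Continuous e.symm) :
    HasGenerator e ↔ HasWeakGenerator e := by
  classical
  constructor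
  · rintro ⟨k, α, hα, hgen⟩
    exact ⟨k, α, hα, fun A => (hgen A).anti
      (Set.iInter_mono fun n => Set.preimage_mono subset_closure)⟩
  · rintro ⟨k, α, ⟨hopen, hadm, hcov⟩, hweak⟩
    by_cases hX : Nonempty X
    swap
    · exact ⟨k, α, ⟨hopen, hadm, hcov⟩, fun A => by
        intro x hx y hy; exact absurd ⟨x⟩ hX⟩
    obtain ⟨x₀⟩ := hX
    have hmem : ∀ x : X, ∃ i, x ∈ α i := by
      intro x
      have : x ∈ ⋃ i, α i := hcov ▸ Set.mem_univ x
      exact Set.mem_iUnion.1 this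
    -- some member of the cover has compact complement
    have hkey : ∃ i, IsCompact (α i)ᶜ := by
      by_contra h
      push_neg at h
      have hcl : ∀ i, IsCompact (closure (α i)) := fun i => (hadm i).resolve_right (h i)
      have hXc : IsCompact (Set.univ : Set X) := by
        refine (isCompact_iUnion hcl).of_isClosed_subset isClosed_univ ?_
        rw [← hcov]
        exact Set.iUnion_mono fun i => subset_closure
      obtain ⟨i₀, hi₀⟩ := hmem x₀
      exact h i₀ (hXc.of_isClosed_subset (hopen i₀).isClosed_compl (Set.subset_univ _))
    -- extend the cover to the one-point compactification
    let at' : Fin k → Set (OnePoint X) := fun i =>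
      if IsCompact (α i)ᶜ then ((↑) '' (α i)ᶜ)ᶜ else (↑) '' (α i)
    have hat_open : ∀ i, IsOpen (at' i) := by
      intro i
      by_cases h : IsCompact (α i)ᶜ
      · simp only [at', if_pos h]
        exact OnePoint.isOpen_compl_image_coe.2 ⟨(hopen i).isClosed_compl, h⟩
      · simp only [at', if_neg h]
        exact OnePoint.isOpen_image_coe.2 (hopen i)
    have hat_coe : ∀ (i) (x : X), (x : OnePoint X) ∈ at' i ↔ x ∈ α i := by
      intro i x
      by_cases h : IsCompact (α i)ᶜ
      · simp only [at', if_pos h, Set.mem_compl_iff,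
          (OnePoint.coe_injective (X := X)).mem_set_image, not_not]
      · simp only [at', if_neg h, (OnePoint.coe_injective (X := X)).mem_set_image]
    have hat_cover : (Set.univ : Set (OnePoint X)) ⊆ ⋃ i, at' i := by
      intro y _
      induction y using OnePoint.rec with
      | infty =>
        obtain ⟨i, hi⟩ := hkey
        refine Set.mem_iUnion.2 ⟨i, ?_⟩
        simp only [at', if_pos hi, Set.mem_compl_iff]
        exact OnePoint.infty_notMem_image_coe
      | coe x =>
        obtain ⟨i, hi⟩ := hmem x
        exact Set.mem_iUnion.2 ⟨i, (hat_coe i x).2 hi⟩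
    -- topology transfer
    have hO : ∀ s : Set (OnePoint X), @IsOpen (OnePoint X) m.toUniformSpace.toTopologicalSpace s ↔ IsOpen s :=
      fun s => iff_of_eq (by rw [hcompat])
    have hC : ∀ s : Set (OnePoint X), @IsCompact (OnePoint X) m.toUniformSpace.toTopologicalSpace s ↔ IsCompact s :=
      fun s => iff_of_eq (by rw [hcompat])
    have hCl : ∀ s : Set (OnePoint X), @closure (OnePoint X) m.toUniformSpace.toTopologicalSpace s = closure s :=
      fun s => by rw [hcompat]
    -- Lebesgue number for the extended cover
    obtain ⟨δ, hδ, hleb⟩ :=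
      @lebesgue_number_lemma_of_metric (OnePoint X) m.toPseudoMetricSpace Set.univ (Fin k) at'
        ((hC _).2 isCompact_univ) (fun i => (hO _).2 (hat_open i)) hat_cover
    -- small sets have closure inside a member of α
    have hsmall : ∀ (s : Set X) (y : OnePoint X) (r : ℝ) (i : Fin k),
        ((↑) '' s : Set (OnePoint X)) ⊆ @Metric.ball (OnePoint X) m.toPseudoMetricSpace y r → r ≤ δ / 2 →
        @Metric.ball (OnePoint X) m.toPseudoMetricSpace y δ ⊆ at' i → closure s ⊆ α i := by
      intro s y r i hsub hr hball
      intro x hx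
      have h1 : (x : OnePoint X) ∈ closure ((↑) '' s : Set (OnePoint X)) := by
        have h := (OnePoint.continuous_coe (X := X)).closure_preimage_subset ((↑) '' s : Set (OnePoint X))
        rw [Set.preimage_image_eq s OnePoint.coe_injective] at h
        exact h hx
      have h2 : (x : OnePoint X) ∈ @closure (OnePoint X) m.toUniformSpace.toTopologicalSpace
          (@Metric.ball (OnePoint X) m.toPseudoMetricSpace y r) := by
        rw [hCl]
        exact closure_mono hsub h1
      have h3 : (x : OnePoint X) ∈ @Metric.closedBall (OnePoint X) m.toPseudoMetricSpace y r :=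
        Set.mem_of_mem_of_subset h2
          (@Metric.closure_ball_subset_closedBall (OnePoint X) m.toPseudoMetricSpace y r)
      have h4 : (x : OnePoint X) ∈ @Metric.ball (OnePoint X) m.toPseudoMetricSpace y δ := by
        rw [@Metric.mem_ball]
        rw [@Metric.mem_closedBall] at h3
        linarith
      exact (hat_coe i x).1 (hball h4)
    -- the neighborhood of infinity
    set Binf : Set (OnePoint X) := @Metric.ball (OnePoint X) m.toPseudoMetricSpace (OnePoint.infty : OnePoint X) (δ / 2) with hBinf
    set Uinf : Set X := (↑) ⁻¹' Binf with hUinf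
    have hUinf_open : IsOpen Uinf :=
      ((hO _).1 (@Metric.isOpen_ball (OnePoint X) m.toPseudoMetricSpace (OnePoint.infty : OnePoint X) (δ / 2))).preimage
        OnePoint.continuous_coe
    have hinf_mem : (OnePoint.infty : OnePoint X) ∈ Binf :=
      @Metric.mem_ball_self (OnePoint X) m.toPseudoMetricSpace (OnePoint.infty : OnePoint X) (δ / 2) (by linarith)
    have hUinf_compl : IsCompact Uinfᶜ := by
      have hCc : IsCompact Binfᶜ :=
        (((hO _).1 (@Metric.isOpen_ball (OnePoint X) m.toPseudoMetricSpace (OnePoint.infty : OnePoint X) (δ / 2))).isClosed_compl).isCompact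
      have hsubr : Binfᶜ ⊆ Set.range ((↑) : X → OnePoint X) := by
        intro y hy
        by_contra h
        rw [OnePoint.notMem_range_coe_iff] at h
        rw [h] at hy
        exact hy hinf_mem
      rw [← Set.preimage_compl]
      rw [OnePoint.isOpenEmbedding_coe.isEmbedding.isCompact_iff,
        Set.image_preimage_eq_of_subset hsubr]
      exact hCc
    -- closure of Uinf lies in a member of α
    obtain ⟨iinf, hiinf⟩ := hleb (OnePoint.infty : OnePoint X) (Set.mem_univ _)
    have hUinf_cl : closure Uinf ⊆ α iinf :=
      hsmall Uinf (OnePoint.infty : OnePoint X) (δ / 2) iinf (Set.image_preimage_subset _ _) le_rfl hiinf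
    -- around each point of X, a small admissible ball
    have hpt : ∀ x : X, ∃ (s : Set X) (i : Fin k),
        IsOpen s ∧ x ∈ s ∧ IsCompact (closure s) ∧ closure s ⊆ α i := by
      intro x
      obtain ⟨i, hi⟩ := hleb (x : OnePoint X) (Set.mem_univ _)
      obtain ⟨K', hK'c, hK'n⟩ := exists_compact_mem_nhds x
      obtain ⟨r, hr, hrK⟩ := Metric.mem_nhds_iff.1 hK'n
      set r' : ℝ := min r (δ / 2) with hr'
      have hr'pos : 0 < r' := lt_min hr (by linarith)
      refine ⟨Metric.ball x r', i, Metric.isOpen_ball, Metric.mem_ball_self hr'pos, ?_, ?_⟩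
      · refine hK'c.of_isClosed_subset isClosed_closure ?_
        calc closure (Metric.ball x r') ⊆ closure (Metric.ball x r) :=
              closure_mono (Metric.ball_subset_ball (min_le_left _ _))
          _ ⊆ K' := hK'c.isClosed.closure_subset_iff.2 hrK
      · refine hsmall _ (x : OnePoint X) r' i ?_ (min_le_right _ _) hi
        rintro _ ⟨z, hz, rfl⟩
        rw [@Metric.mem_ball, hrestrict]
        exact Metric.mem_ball.1 hz
    choose s ind hso hsx hsc hsa using hpt
    -- finitely many of these balls cover the compact complement of Uinf
    obtain ⟨t, ht⟩ := hUinf_compl.elim_finite_subcover s hso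
      (fun x _ => Set.mem_iUnion.2 ⟨x, hsx x⟩)
    set n := t.card with hn
    set φ : Fin n → X := fun j => (t.equivFin.symm j : X) with hφ
    set β : Fin (n + 1) → Set X := Fin.cons Uinf (fun j => s (φ j)) with hβ
    set g : Fin (n + 1) → Fin k := Fin.cons iinf (fun j => ind (φ j)) with hg
    have hβ_cl : ∀ j, closure (β j) ⊆ α (g j) := by
      intro j
      refine Fin.cases ?_ ?_ j
      · simpa [hβ, hg] using hUinf_cl
      · intro j'
        simpa [hβ, hg] using hsa (φ j')
    refine ⟨n + 1, β, ⟨?_, ?_, ?_⟩, ?_⟩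
    · intro j
      refine Fin.cases ?_ ?_ j
      · simpa [hβ] using hUinf_open
      · intro j'; simpa [hβ] using hso (φ j')
    · intro j
      refine Fin.cases ?_ ?_ j
      · right; simpa [hβ] using hUinf_compl
      · intro j'; left; simpa [hβ] using hsc (φ j')
    · refine Set.eq_univ_of_forall fun x => ?_
      by_cases hx : x ∈ Uinf
      · exact Set.mem_iUnion.2 ⟨0, by simpa [hβ] using hx⟩
      · have hx' : x ∈ ⋃ y ∈ t, s y := ht hx
        obtain ⟨y, hyt, hxy⟩ := Set.mem_iUnion₂.1 hx'
        refine Set.mem_iUnion.2 ⟨(t.equivFin ⟨y, hyt⟩).succ, ?_⟩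
        have : φ (t.equivFin ⟨y, hyt⟩) = y := by
          simp [hφ]
        simp only [hβ, Fin.cons_succ, this]
        exact hxy
    · intro C
      refine (hweak fun nn => g (C nn)).anti ?_
      exact Set.iInter_mono fun nn => Set.preimage_mono (hβ_cl (C nn))
end
end

section
/- Let f : X → X be an expansive homeomorphism of a locally compact separable metric space (X, d), where d is the restriction of a metric d̃ on the one-point compactification X̃. Then the extension f̃ : X̃ → X̃ (with f̃(∞) = ∞) is an expansive homeomorphism of (X̃, d̃). -/
/-- The extension of a bijection `e : X ≃ X` to the one-point compactification,
fixing the point at infinity. -/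
def onePointCongr {X : Type*} (e : X ≃ X) : OnePoint X ≃ OnePoint X :=
  Equiv.optionCongr e

private def optionCongrHom' (X : Type*) : Equiv.Perm X →* Equiv.Perm (Option X) where
  toFun := Equiv.optionCongr
  map_one' := Equiv.optionCongr_refl
  map_mul' a b := by
    simp only [Equiv.Perm.mul_def, ← Equiv.optionCongr_trans]

private lemma onePointCongr_zpow {X : Type*} (e : X ≃ X) (n : ℤ) :
    onePointCongr e ^ n = onePointCongr (e ^ n) :=
  (map_zpow (optionCongrHom' X) e n).symm

private lemma onePointCongr_apply_coe {X : Type*} (e : X ≃ X) (x : X) :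
    onePointCongr e (x : OnePoint X) = ((e x : X) : OnePoint X) := rfl

private lemma onePointCongr_apply_infty {X : Type*} (e : X ≃ X) :
    onePointCongr e (OnePoint.infty : OnePoint X) = OnePoint.infty := rfl


/-- Let `f : X → X` be an expansive homeomorphism of a locally compact separable
metric space `(X, d)`, where `d` is the restriction of a metric `d̃` on the
one-point compactification `X̃` (a metric inducing the topology of `X̃`). Then the
extension `f̃ : X̃ → X̃` (sending `∞` to `∞`) is an expansive homeomorphism of
`(X̃, d̃)`: it and its inverse are continuous, and there is `δ > 0` separating any
two distinct points of `X̃` under some iterate `f̃^n`, `n ∈ ℤ`. -/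
theorem onePointExtension_expansive {X : Type*} [MetricSpace X]
    [LocallyCompactSpace X] [TopologicalSpace.SeparableSpace X]
    (m : MetricSpace (OnePoint X))
    (hcompat : m.toUniformSpace.toTopologicalSpace =
      (inferInstance : TopologicalSpace (OnePoint X)))
    (hrestrict : ∀ x y : X,
      @dist _ m.toPseudoMetricSpace.toDist (x : OnePoint X) (y : OnePoint X) = dist x y)
    (e : X ≃ X) (hc : Continuous e) (hc' : Continuous e.symm)
    (hexp : ∃ δ : ℝ, 0 < δ ∧
      ∀ x y : X, x ≠ y → ∃ n : ℤ, δ < dist ((e ^ n) x) ((e ^ n) y)) :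
    Continuous (onePointCongr e) ∧ Continuous (onePointCongr e).symm ∧
    ∃ δ : ℝ, 0 < δ ∧ ∀ x y : OnePoint X, x ≠ y → ∃ n : ℤ,
      δ < @dist _ m.toPseudoMetricSpace.toDist
          ((onePointCongr e ^ n) x) ((onePointCongr e ^ n) y) := by
  obtain ⟨δ, hδ, hsep⟩ := hexp
  set h : X ≃ₜ X := ⟨e, hc, hc'⟩ with hh
  have hcont : Continuous (onePointCongr e) := (Homeomorph.onePointCongr h).continuous
  have hcont' : Continuous (onePointCongr e).symm :=
    (Homeomorph.onePointCongr h).symm.continuous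
  refine ⟨hcont, hcont', ?_⟩
  set D : OnePoint X → OnePoint X → ℝ := @dist _ m.toPseudoMetricSpace.toDist with hD
  have Dcomm : ∀ a b, D a b = D b a := fun a b => @dist_comm _ m.toPseudoMetricSpace a b
  have Dtri : ∀ a b c, D a c ≤ D a b + D b c := fun a b c =>
    @dist_triangle _ m.toPseudoMetricSpace a b c
  set S : Set X := {x | ∀ n : ℤ, D ((e ^ n) x : X) OnePoint.infty ≤ δ / 2} with hSdef
  have hS : S.Subsingleton := by
    intro x hx y hy
    by_contra hxy
    obtain ⟨n, hn⟩ := hsep x y hxy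
    have h1 : D ((e ^ n) x : X) ((e ^ n) y : X) = dist ((e ^ n) x) ((e ^ n) y) :=
      hrestrict _ _
    have h2 := hx n
    have h3 := hy n
    have h4 := Dtri ((e ^ n) x : X) OnePoint.infty ((e ^ n) y : X)
    rw [Dcomm OnePoint.infty] at h4
    linarith
  have key : ∃ δ' : ℝ, 0 < δ' ∧ δ' ≤ δ / 2 ∧
      ∀ x : X, ∃ n : ℤ, δ' < D ((e ^ n) x : X) OnePoint.infty := by
    by_cases hS0 : S.Nonempty
    · obtain ⟨x₀, hx₀⟩ := hS0
      have hfix : e x₀ = x₀ := by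
        have hmem : e x₀ ∈ S := by
          intro n
          have : (e ^ n) (e x₀) = (e ^ (n + 1)) x₀ := by
            rw [zpow_add_one, Equiv.Perm.mul_apply]
          rw [this]
          exact hx₀ (n + 1)
        exact hS hmem hx₀
      have horb : ∀ n : ℤ, (e ^ n) x₀ = x₀ := fun n =>
        Equiv.Perm.zpow_apply_eq_self_of_apply_eq_self hfix n
      have hr : 0 < D (x₀ : OnePoint X) OnePoint.infty := by
        refine (@dist_pos _ m _ _).mpr ?_
        exact OnePoint.coe_ne_infty x₀
      refine ⟨min (δ / 2) (D (x₀ : OnePoint X) OnePoint.infty / 2),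
        lt_min (by linarith) (by linarith), min_le_left _ _, fun x => ?_⟩
      by_cases hxx : x = x₀
      · subst hxx
        refine ⟨0, ?_⟩
        have h0 : (e ^ (0 : ℤ)) x = x := by simp
        rw [h0]
        exact lt_of_le_of_lt (min_le_right _ _) (by linarith)
      · have hxS : x ∉ S := fun hx => hxx (hS hx hx₀)
        simp only [hSdef, Set.mem_setOf_eq, not_forall, not_le] at hxS
        obtain ⟨n, hn⟩ := hxS
        exact ⟨n, lt_of_le_of_lt (min_le_left _ _) hn⟩
    · refine ⟨δ / 2, by linarith, le_refl _, fun x => ?_⟩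
      have hxS : x ∉ S := fun hx => hS0 ⟨x, hx⟩
      simp only [hSdef, Set.mem_setOf_eq, not_forall, not_le] at hxS
      exact hxS
  obtain ⟨δ', hδ'pos, hδ'le, hδ'⟩ := key
  refine ⟨δ', hδ'pos, fun x y hxy => ?_⟩
  induction x using OnePoint.rec with
  | infty =>
    induction y using OnePoint.rec with
    | infty => exact absurd rfl hxy
    | coe b =>
      obtain ⟨n, hn⟩ := hδ' b
      refine ⟨n, ?_⟩
      rw [onePointCongr_zpow, onePointCongr_apply_infty, onePointCongr_apply_coe]
      rw [Dcomm]
      exact hn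
  | coe a =>
    induction y using OnePoint.rec with
    | infty =>
      obtain ⟨n, hn⟩ := hδ' a
      refine ⟨n, ?_⟩
      rw [onePointCongr_zpow, onePointCongr_apply_infty, onePointCongr_apply_coe]
      exact hn
    | coe b =>
      have hab : a ≠ b := fun hab => hxy (by rw [hab])
      obtain ⟨n, hn⟩ := hsep a b hab
      refine ⟨n, ?_⟩
      rw [onePointCongr_zpow, onePointCongr_apply_coe, onePointCongr_apply_coe, hrestrict]
      linarith
end
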